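/- arXiv:2201.07017 — 2 statements merged into one kernel-verified Lean document; each statement's English description precedes it below -/
import Mathlib

section
/- Let U ∈ ℝ^{m×k} have orthonormal columns and S ∈ ℝ^{m×k} be a selection matrix with S^T U invertible. Then the spectral norm of the oblique projector P = U (S^T U)^{-1} S^T equals ‖(S^T U)^{-1}‖, i.e., ‖P‖ = 1/σ_min(S^T U). -/
open Matrix

def IsSelection {m k : ℕ} (S : Matrix (Fin m) (Fin k) ℝ) : Prop :=
  ∃ s : Fin k → Fin m, Function.Injective s ∧ ∀ i j, S i j = if i = s j then 1 else 0

noncomputable def specNorm {m n : ℕ} (A : Matrix (Fin m) (Fin n) ℝ) : ℝ :=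
  ‖LinearMap.toContinuousLinearMap (Matrix.toEuclideanLin A)‖

noncomputable def sigmaMin {n : ℕ} (M : Matrix (Fin n) (Fin n) ℝ) : ℝ :=
  sInf ((fun x : EuclideanSpace ℝ (Fin n) => ‖Matrix.toEuclideanLin M x‖) '' {x | ‖x‖ = 1})

noncomputable def sigmaSucc {m n : ℕ} (k : ℕ) (A : Matrix (Fin m) (Fin n) ℝ) : ℝ :=
  sInf {x | ∃ B : Matrix (Fin m) (Fin n) ℝ, B.rank ≤ k ∧ specNorm (A - B) = x}


noncomputable def clm {m n : ℕ} (A : Matrix (Fin m) (Fin n) ℝ) :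
    EuclideanSpace ℝ (Fin n) →L[ℝ] EuclideanSpace ℝ (Fin m) :=
  LinearMap.toContinuousLinearMap (Matrix.toEuclideanLin A)

lemma clm_mul {m n p : ℕ} (A : Matrix (Fin m) (Fin n) ℝ) (B : Matrix (Fin n) (Fin p) ℝ) :
    clm (A * B) = (clm A).comp (clm B) := by
  ext x
  simp [clm, Matrix.toEuclideanLin_apply, Matrix.mulVec_mulVec]

lemma clm_one {n : ℕ} : clm (1 : Matrix (Fin n) (Fin n) ℝ) = ContinuousLinearMap.id ℝ _ := by
  ext x
  simp [clm, Matrix.toEuclideanLin_apply]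

lemma norm_clm_apply_of_orth {m k : ℕ} {A : Matrix (Fin m) (Fin k) ℝ} (hA : Aᵀ * A = 1)
    (x : EuclideanSpace ℝ (Fin k)) : ‖clm A x‖ = ‖x‖ := by
  have h1 : Aᴴ = Aᵀ := by ext i j; simp [conjTranspose_apply]
  have h2 : clm Aᵀ (clm A x) = x := by
    have := congrArg clm hA
    rw [clm_mul, clm_one] at this
    calc clm Aᵀ (clm A x) = ((clm Aᵀ).comp (clm A)) x := rfl
      _ = x := by rw [this]; rfl
  have h3 : (inner ℝ (clm A x) (clm A x) : ℝ) = inner ℝ x x := by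
    have := LinearMap.adjoint_inner_left (Matrix.toEuclideanLin A) x (clm A x)
    rw [← Matrix.toEuclideanLin_conjTranspose_eq_adjoint, h1] at this
    have hx : Matrix.toEuclideanLin Aᵀ (clm A x) = x := h2
    rw [hx] at this
    exact (this.symm.trans rfl)
  rw [real_inner_self_eq_norm_mul_norm, real_inner_self_eq_norm_mul_norm] at h3
  exact (mul_self_inj (norm_nonneg _) (norm_nonneg _)).mp h3

lemma selection_transpose_mul_self {m k : ℕ} {S : Matrix (Fin m) (Fin k) ℝ} (hS : IsSelection S) :
    Sᵀ * S = 1 := by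
  obtain ⟨s, hinj, hSe⟩ := hS
  ext j j'
  simp [Matrix.mul_apply, hSe, Matrix.one_apply, Finset.sum_ite_eq, hinj.eq_iff, ite_mul, mul_ite,
    Finset.sum_ite_eq']
  exact if_congr eq_comm rfl rfl

lemma selection_apply_norm_le {m k : ℕ} {S : Matrix (Fin m) (Fin k) ℝ} (hS : IsSelection S)
    (x : EuclideanSpace ℝ (Fin m)) : ‖clm Sᵀ x‖ ≤ ‖x‖ := by
  obtain ⟨s, hinj, hSe⟩ := hS
  have hcomp : ∀ j, clm Sᵀ x j = x (s j) := by
    intro j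
    simp [clm, Matrix.toEuclideanLin_apply, Matrix.mulVec, dotProduct, hSe,
      Matrix.transpose_apply, ite_mul, Finset.sum_ite_eq']
  rw [EuclideanSpace.norm_eq, EuclideanSpace.norm_eq]
  apply Real.sqrt_le_sqrt
  simp only [hcomp]
  have himg : ∑ j : Fin k, ‖x (s j)‖^2 = ∑ i ∈ Finset.univ.image s, ‖x i‖^2 :=
    (Finset.sum_image (f := fun i => ‖x i‖^2) (fun a _ b _ h => hinj h)).symm
  rw [himg]
  exact Finset.sum_le_sum_of_subset_of_nonneg (Finset.subset_univ _) (by intros; positivity)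

lemma opnorm_comp_clm_eq {k m p : ℕ} {A : Matrix (Fin m) (Fin k) ℝ} (hA : Aᵀ * A = 1)
    (g : EuclideanSpace ℝ (Fin p) →L[ℝ] EuclideanSpace ℝ (Fin k)) :
    ‖(clm A).comp g‖ = ‖g‖ :=
  ContinuousLinearMap.opNorm_ext _ _ (fun x => norm_clm_apply_of_orth hA (g x))

lemma opnorm_comp_selection {m k p : ℕ} {S : Matrix (Fin m) (Fin k) ℝ} (hS : IsSelection S)
    (g : EuclideanSpace ℝ (Fin k) →L[ℝ] EuclideanSpace ℝ (Fin p)) :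
    ‖g.comp (clm Sᵀ)‖ = ‖g‖ := by
  have hStS := selection_transpose_mul_self hS
  have hSnorm : ‖clm S‖ ≤ 1 := ContinuousLinearMap.opNorm_le_bound _ zero_le_one
    (fun x => by rw [norm_clm_apply_of_orth hStS, one_mul])
  have hSTnorm : ‖clm Sᵀ‖ ≤ 1 := ContinuousLinearMap.opNorm_le_bound _ zero_le_one
    (fun x => by rw [one_mul]; exact selection_apply_norm_le hS x)
  apply le_antisymm
  · calc ‖g.comp (clm Sᵀ)‖ ≤ ‖g‖ * ‖clm Sᵀ‖ := ContinuousLinearMap.opNorm_comp_le _ _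
      _ ≤ ‖g‖ * 1 := mul_le_mul_of_nonneg_left hSTnorm (norm_nonneg _)
      _ = ‖g‖ := mul_one _
  · have h : g = (g.comp (clm Sᵀ)).comp (clm S) := by
      rw [ContinuousLinearMap.comp_assoc, ← clm_mul, hStS, clm_one, ContinuousLinearMap.comp_id]
    calc ‖g‖ = ‖(g.comp (clm Sᵀ)).comp (clm S)‖ := by rw [← h]
      _ ≤ ‖g.comp (clm Sᵀ)‖ * ‖clm S‖ := ContinuousLinearMap.opNorm_comp_le _ _
      _ ≤ ‖g.comp (clm Sᵀ)‖ * 1 := mul_le_mul_of_nonneg_left hSnorm (norm_nonneg _)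
      _ = _ := mul_one _

lemma specNorm_eq_clm {m n : ℕ} (A : Matrix (Fin m) (Fin n) ℝ) : specNorm A = ‖clm A‖ := rfl

lemma specNorm_inv_eq {k : ℕ} (M : Matrix (Fin k) (Fin k) ℝ) (hM : IsUnit M) :
    specNorm M⁻¹ = (sigmaMin M)⁻¹ := by
  rcases subsingleton_or_nontrivial (EuclideanSpace ℝ (Fin k)) with hsub | hnt
  · have h1 : specNorm M⁻¹ = 0 := by
      rw [specNorm_eq_clm]
      refine le_antisymm (ContinuousLinearMap.opNorm_le_bound _ le_rfl ?_) (norm_nonneg _)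
      intro x
      rw [Subsingleton.elim (clm M⁻¹ x) 0, norm_zero, zero_mul]
    have h2 : sigmaMin M = 0 := by
      unfold sigmaMin
      have he : {x : EuclideanSpace ℝ (Fin k) | ‖x‖ = 1} = ∅ := by
        ext x; simp [Subsingleton.elim x 0]
      rw [he, Set.image_empty, Real.sInf_empty]
    rw [h1, h2, _root_.inv_zero]
  · set f := clm M with hf
    set g := clm M⁻¹ with hg
    have hdet : IsUnit M.det := (Matrix.isUnit_iff_isUnit_det M).mp hM
    have hgf : ∀ x, g (f x) = x := by
      intro x
      have h := congrArg clm (Matrix.nonsing_inv_mul M hdet)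
      rw [clm_mul, clm_one] at h
      calc g (f x) = ((clm M⁻¹).comp (clm M)) x := rfl
        _ = x := by rw [h]; rfl
    have hfg : ∀ x, f (g x) = x := by
      intro x
      have h := congrArg clm (Matrix.mul_nonsing_inv M hdet)
      rw [clm_mul, clm_one] at h
      calc f (g x) = ((clm M).comp (clm M⁻¹)) x := rfl
        _ = x := by rw [h]; rfl
    set T := (fun x : EuclideanSpace ℝ (Fin k) => ‖Matrix.toEuclideanLin M x‖) '' {x | ‖x‖ = 1}
      with hT
    have hTf : ∀ x : EuclideanSpace ℝ (Fin k), ‖x‖ = 1 → ‖f x‖ ∈ T := fun x hx => ⟨x, hx, rfl⟩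
    obtain ⟨x₀, hx₀⟩ := exists_norm_eq (EuclideanSpace ℝ (Fin k)) (zero_le_one)
    have hne : T.Nonempty := ⟨‖f x₀‖, hTf x₀ hx₀⟩
    have hbdd : BddBelow T := ⟨0, by rintro a ⟨x, _, rfl⟩; exact norm_nonneg _⟩
    have hgpos : 0 < ‖g‖ := by
      rcases (norm_nonneg g).lt_or_eq with h | h
      · exact h
      · exfalso
        have h1 : ‖g (f x₀)‖ ≤ ‖g‖ * ‖f x₀‖ := g.le_opNorm _
        rw [hgf, hx₀, ← h, zero_mul] at h1
        linarith
    have hsig : sigmaMin M = sInf T := rfl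
    have hlb : ‖g‖⁻¹ ≤ sigmaMin M := by
      rw [hsig]
      apply le_csInf hne
      rintro a ⟨x, hx1, rfl⟩
      have h1 : ‖g (f x)‖ ≤ ‖g‖ * ‖f x‖ := g.le_opNorm _
      rw [hgf] at h1
      rw [Set.mem_setOf_eq] at hx1
      rw [hx1] at h1
      rw [inv_le_iff_one_le_mul₀ hgpos]
      show (1:ℝ) ≤ ‖f x‖ * ‖g‖
      rw [mul_comm]
      exact h1
    have hcpos : 0 < sigmaMin M := lt_of_lt_of_le (inv_pos.mpr hgpos) hlb
    have hub : ‖g‖ ≤ (sigmaMin M)⁻¹ := by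
      apply ContinuousLinearMap.opNorm_le_bound _ (inv_nonneg.mpr hcpos.le)
      intro y
      by_cases hgy : g y = 0
      · rw [hgy, norm_zero]; positivity
      · have hxnz : ‖g y‖ ≠ 0 := norm_ne_zero_iff.mpr hgy
        have hgypos : 0 < ‖g y‖ := (norm_nonneg _).lt_of_ne' hxnz
        set u : EuclideanSpace ℝ (Fin k) := ‖g y‖⁻¹ • g y with hu'
        have hu : ‖u‖ = 1 := by
          rw [hu', norm_smul, norm_inv, norm_norm, inv_mul_cancel₀ hxnz]
        have h1 : sigmaMin M ≤ ‖f u‖ := by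
          rw [hsig]; exact csInf_le hbdd (hTf u hu)
        have h2 : ‖f u‖ = ‖g y‖⁻¹ * ‖y‖ := by
          have he : f u = ‖g y‖⁻¹ • y := by rw [hu', f.map_smul, hfg]
          rw [he, norm_smul, norm_inv, norm_norm]
        rw [h2] at h1
        have h3 : sigmaMin M * ‖g y‖ ≤ ‖y‖ := by
          have h4 := mul_le_mul_of_nonneg_right h1 (norm_nonneg (g y))
          calc sigmaMin M * ‖g y‖ ≤ ‖g y‖⁻¹ * ‖y‖ * ‖g y‖ := h4
            _ = ‖y‖ := by field_simp
        calc ‖g y‖ = (sigmaMin M)⁻¹ * (sigmaMin M * ‖g y‖) := by field_simp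
          _ ≤ (sigmaMin M)⁻¹ * ‖y‖ :=
            mul_le_mul_of_nonneg_left h3 (inv_nonneg.mpr hcpos.le)
    have hge : (sigmaMin M)⁻¹ ≤ ‖g‖ := by
      calc (sigmaMin M)⁻¹ ≤ (‖g‖⁻¹)⁻¹ := by gcongr
        _ = ‖g‖ := inv_inv _
    exact le_antisymm hub hge

theorem stmt_7 {m k : ℕ} (U : Matrix (Fin m) (Fin k) ℝ) (S : Matrix (Fin m) (Fin k) ℝ)
    (hU : Uᵀ * U = 1) (hS : IsSelection S) (hinv : IsUnit (Sᵀ * U)) :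
    specNorm (U * (Sᵀ * U)⁻¹ * Sᵀ) = specNorm ((Sᵀ * U)⁻¹) ∧
    specNorm (U * (Sᵀ * U)⁻¹ * Sᵀ) = (sigmaMin (Sᵀ * U))⁻¹ := by
  have hA : specNorm (U * (Sᵀ * U)⁻¹ * Sᵀ) = specNorm (Sᵀ * U)⁻¹ := by
    rw [specNorm_eq_clm, specNorm_eq_clm, Matrix.mul_assoc, clm_mul, clm_mul,
      opnorm_comp_clm_eq hU]
    exact opnorm_comp_selection hS _
  exact ⟨hA, hA.trans (specNorm_inv_eq _ hinv)⟩
end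

section
/- Let A ∈ ℝ^{m×n} and let C consist of k̂ columns of A with full column rank, R consist of k̂ rows of A with full row rank, and M = C^+ A R^+ (pseudoinverses). Then the relative error satisfies ‖A − C M R‖ ≤ ‖A − C C^+ A‖ + ‖A − A R^+ R‖ in spectral norm, and each term is at least σ_{k̂+1}(A). -/
open Matrix

open scoped Matrix.Norms.L2Operator

lemma specNorm_eq_l2 {m n : ℕ} (A : Matrix (Fin m) (Fin n) ℝ) : specNorm A = ‖A‖ := rfl

lemma isUnit_of_rank_eq {k : ℕ} (B : Matrix (Fin k) (Fin k) ℝ) (h : B.rank = k) : IsUnit B := by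
  rw [← Matrix.mulVec_surjective_iff_isUnit]
  have hr : LinearMap.range B.mulVecLin = ⊤ := by
    apply Submodule.eq_top_of_finrank_eq
    rw [← Matrix.rank, h]
    simp
  intro y
  exact (LinearMap.range_eq_top.mp hr) y

lemma conjT_eq_of_symm {m : ℕ} (P : Matrix (Fin m) (Fin m) ℝ) (hsym : Pᵀ = P) : Pᴴ = P := by
  have : Pᴴ = Pᵀ := by ext i j; simp [conjTranspose_apply]
  rw [this, hsym]

lemma norm_proj_le_one {m : ℕ} (P : Matrix (Fin m) (Fin m) ℝ) (hsym : Pᵀ = P)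
    (hidem : P * P = P) : ‖P‖ ≤ 1 := by
  have h := Matrix.l2_opNorm_conjTranspose_mul_self P
  rw [conjT_eq_of_symm P hsym, hidem] at h
  nlinarith [norm_nonneg P]

lemma sigmaSucc_le {m n kh : ℕ} (A B : Matrix (Fin m) (Fin n) ℝ) (hB : B.rank ≤ kh) :
    sigmaSucc kh A ≤ specNorm (A - B) := by
  apply csInf_le
  · refine ⟨0, ?_⟩
    rintro x ⟨B', _, rfl⟩
    rw [specNorm_eq_l2]
    exact norm_nonneg _
  · exact ⟨B, hB, rfl⟩

theorem stmt_15 {m n kh : ℕ} (A : Matrix (Fin m) (Fin n) ℝ)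
    (P : Matrix (Fin n) (Fin kh) ℝ) (S : Matrix (Fin m) (Fin kh) ℝ)
    (hP : IsSelection P) (hS : IsSelection S)
    (C : Matrix (Fin m) (Fin kh) ℝ) (R : Matrix (Fin kh) (Fin n) ℝ)
    (hC : C = A * P) (hR : R = Sᵀ * A) (hrC : C.rank = kh) (hrR : R.rank = kh)
    (M : Matrix (Fin kh) (Fin kh) ℝ) (hM : M = ((Cᵀ * C)⁻¹ * Cᵀ) * A * (Rᵀ * (R * Rᵀ)⁻¹)) :
    specNorm (A - C * M * R) ≤
      specNorm (A - C * (((Cᵀ * C)⁻¹ * Cᵀ) * A)) + specNorm (A - A * ((Rᵀ * (R * Rᵀ)⁻¹) * R)) ∧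
    sigmaSucc kh A ≤ specNorm (A - C * (((Cᵀ * C)⁻¹ * Cᵀ) * A)) ∧
    sigmaSucc kh A ≤ specNorm (A - A * ((Rᵀ * (R * Rᵀ)⁻¹) * R)) := by
  have hCu : IsUnit (Cᵀ * C) := by
    apply isUnit_of_rank_eq
    rw [Matrix.rank_transpose_mul_self, hrC]
  have hRu : IsUnit (R * Rᵀ) := by
    apply isUnit_of_rank_eq
    rw [Matrix.rank_self_mul_transpose, hrR]
  have hCd : IsUnit (Cᵀ * C).det := (Matrix.isUnit_iff_isUnit_det _).mp hCu
  have hRd : IsUnit (R * Rᵀ).det := (Matrix.isUnit_iff_isUnit_det _).mp hRu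
  set PC : Matrix (Fin m) (Fin m) ℝ := C * ((Cᵀ * C)⁻¹ * Cᵀ) with hPC
  set QR : Matrix (Fin n) (Fin n) ℝ := (Rᵀ * (R * Rᵀ)⁻¹) * R with hQR
  have hPCsym : PCᵀ = PC := by
    rw [hPC, Matrix.transpose_mul, Matrix.transpose_mul, Matrix.transpose_nonsing_inv,
      Matrix.transpose_mul, Matrix.transpose_transpose]
    simp only [Matrix.mul_assoc]
  have hPCidem : PC * PC = PC := by
    rw [hPC]
    have : C * ((Cᵀ * C)⁻¹ * Cᵀ) * (C * ((Cᵀ * C)⁻¹ * Cᵀ))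
        = C * ((Cᵀ * C)⁻¹ * (Cᵀ * C) * ((Cᵀ * C)⁻¹ * Cᵀ)) := by
      simp only [Matrix.mul_assoc]
    rw [this, Matrix.nonsing_inv_mul _ hCd, Matrix.one_mul]
  have hQRsym : QRᵀ = QR := by
    rw [hQR, Matrix.transpose_mul, Matrix.transpose_mul, Matrix.transpose_nonsing_inv,
      Matrix.transpose_mul, Matrix.transpose_transpose]
    simp only [Matrix.mul_assoc]
  have hQRidem : QR * QR = QR := by
    rw [hQR]
    have : (Rᵀ * (R * Rᵀ)⁻¹) * R * ((Rᵀ * (R * Rᵀ)⁻¹) * R)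
        = Rᵀ * ((R * Rᵀ)⁻¹ * (R * Rᵀ) * ((R * Rᵀ)⁻¹ * R)) := by
      simp only [Matrix.mul_assoc]
    rw [this, Matrix.nonsing_inv_mul _ hRd, Matrix.one_mul]
    simp only [Matrix.mul_assoc]
  have key1 : A - C * M * R = (A - PC * A) + PC * (A - A * QR) := by
    rw [hM, hPC, hQR, Matrix.mul_sub]
    simp only [Matrix.mul_assoc]
    abel
  have hgoal1 : A - C * (((Cᵀ * C)⁻¹ * Cᵀ) * A) = A - PC * A := by
    rw [hPC]; simp only [Matrix.mul_assoc]
  have hgoal2 : A - A * ((Rᵀ * (R * Rᵀ)⁻¹) * R) = A - A * QR := by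
    rw [hQR]
  refine ⟨?_, ?_, ?_⟩
  · rw [key1, hgoal1, hgoal2, specNorm_eq_l2, specNorm_eq_l2, specNorm_eq_l2]
    calc ‖(A - PC * A) + PC * (A - A * QR)‖
        ≤ ‖A - PC * A‖ + ‖PC * (A - A * QR)‖ := norm_add_le _ _
      _ ≤ ‖A - PC * A‖ + ‖A - A * QR‖ := by
          have h1 : ‖PC * (A - A * QR)‖ ≤ ‖PC‖ * ‖A - A * QR‖ := Matrix.l2_opNorm_mul _ _
          have h2 : ‖PC‖ ≤ 1 := norm_proj_le_one PC hPCsym hPCidem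
          nlinarith [norm_nonneg (A - A * QR)]
  · apply sigmaSucc_le
    calc (C * (((Cᵀ * C)⁻¹ * Cᵀ) * A)).rank ≤ C.rank := Matrix.rank_mul_le_left _ _
      _ ≤ kh := le_of_eq hrC
  · apply sigmaSucc_le
    calc (A * ((Rᵀ * (R * Rᵀ)⁻¹) * R)).rank ≤ ((Rᵀ * (R * Rᵀ)⁻¹) * R).rank :=
          Matrix.rank_mul_le_right _ _
      _ ≤ R.rank := Matrix.rank_mul_le_right _ _
      _ ≤ kh := le_of_eq hrR
end
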